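/- arXiv:2006.09171 — 9 statements merged into one kernel-verified Lean document; each statement's English description precedes it below -/
import Mathlib

section
/- Let I be a finite nonempty type, ι a finite type indexing the random variables, O a finite type indexing the observable variables, ρ : O ↪ ι an injection, and f : O → (ι → I) → I a family of computations. Assume that for every j : O: (i) for every j' : O with j' ≠ j, f j does not depend on coordinate ρ j', i.e. f j (Function.update v (ρ j') x) = f j v for all v : ι → I and x : I; and (ii) f j is invertible at coordinate ρ j, i.e. for every v : ι → I the map x ↦ f j (Function.update v (ρ j) x) : I → I is bijective. Then PMF.map (fun v => fun j : O => f j v) (PMF.uniformOfFintype (ι → I)) = PMF.uniformOfFintype (O → I). -/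
open scoped ENNReal

theorem dominant_variables_uniform
    {I ι O : Type*} [Fintype I] [Nonempty I] [DecidableEq ι] [Fintype ι]
    [DecidableEq O] [Fintype O]
    (ρ : O ↪ ι) (f : O → (ι → I) → I)
    (h1 : ∀ j j' : O, j' ≠ j → ∀ (v : ι → I) (x : I),
      f j (Function.update v (ρ j') x) = f j v)
    (h2 : ∀ (j : O) (v : ι → I),
      Function.Bijective (fun x : I => f j (Function.update v (ρ j) x))) :
    PMF.map (fun v => fun j : O => f j v) (PMF.uniformOfFintype (ι → I))
      = PMF.uniformOfFintype (O → I) := by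
  classical
  -- f j only depends on the coordinate ρ j and coordinates outside the range of ρ
  have fdep : ∀ (j : O) (s : Finset O) (v v' : ι → I),
      (∀ i, v i ≠ v' i → ∃ j' ∈ s, j' ≠ j ∧ ρ j' = i) → f j v = f j v' := by
    intro j s
    induction s using Finset.induction_on with
    | empty =>
      intro v v' h
      congr 1
      funext i
      by_contra hne
      obtain ⟨j', hj', _⟩ := h i hne
      exact absurd hj' (Finset.notMem_empty _)
    | @insert a s ha ih =>
      intro v v' h
      by_cases haj : a = j
      · apply ih
        intro i hi
        obtain ⟨j', hj's, hj'j, hρ⟩ := h i hi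
        rcases Finset.mem_insert.mp hj's with rfl | hs
        · exact absurd haj hj'j
        · exact ⟨j', hs, hj'j, hρ⟩
      · have h1a : f j (Function.update v (ρ a) (v' (ρ a))) = f j v := h1 j a haj v _
        rw [← h1a]
        apply ih
        intro i hi
        by_cases hia : i = ρ a
        · subst hia
          rw [Function.update_self] at hi
          exact absurd rfl hi
        · rw [Function.update_of_ne hia] at hi
          obtain ⟨j', hj's, hj'j, hρ⟩ := h i hi
          rcases Finset.mem_insert.mp hj's with rfl | hs
          · exact absurd hρ.symm hia
          · exact ⟨j', hs, hj'j, hρ⟩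
  set C := {i : ι // i ∉ Set.range ρ} with hC
  set E : (ι → I) → (O → I) × (C → I) :=
    fun v => (fun j => f j v, fun i => v i.1) with hE
  have hEinj : Function.Injective E := by
    intro v v' hvv'
    have hF : ∀ j, f j v = f j v' := fun j => congrFun (congrArg Prod.fst hvv') j
    have hCc : ∀ i, i ∉ Set.range ρ → v i = v' i :=
      fun i hi => congrFun (congrArg Prod.snd hvv') ⟨i, hi⟩
    have hR : ∀ j, v (ρ j) = v' (ρ j) := by
      intro j
      have e1 : f j v = f j (Function.update v' (ρ j) (v (ρ j))) := by
        apply fdep j Finset.univ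
        intro i hi
        have hiρ : i ≠ ρ j := by
          rintro rfl
          rw [Function.update_self] at hi
          exact hi rfl
        rw [Function.update_of_ne hiρ] at hi
        have hir : i ∈ Set.range ρ := by
          by_contra hr
          exact hi (hCc i hr)
        obtain ⟨j', rfl⟩ := hir
        exact ⟨j', Finset.mem_univ _, fun hjj => hiρ (by rw [hjj]), rfl⟩
      have e2 : f j (Function.update v' (ρ j) (v' (ρ j)))
          = f j (Function.update v' (ρ j) (v (ρ j))) := by
        rw [Function.update_eq_self, ← hF j, e1]
      exact ((h2 j v').injective e2.symm)
    funext i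
    by_cases hir : i ∈ Set.range ρ
    · obtain ⟨j, rfl⟩ := hir
      exact hR j
    · exact hCc i hir
  have cardι : Fintype.card ι = Fintype.card O + Fintype.card C := by
    have hcr : Fintype.card {i : ι // i ∈ Set.range ρ} = Fintype.card O :=
      (Fintype.card_congr (Equiv.ofInjective ρ ρ.injective)).symm
    have hsum := Fintype.card_congr (Equiv.sumCompl (fun i : ι => i ∈ Set.range ρ)).symm
    rw [Fintype.card_sum, hcr] at hsum
    convert hsum using 3
  have cardE : Fintype.card (ι → I) = Fintype.card ((O → I) × (C → I)) := by
    rw [Fintype.card_prod, Fintype.card_fun, Fintype.card_fun, Fintype.card_fun,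
      cardι, pow_add]
  have hEbij : Function.Bijective E :=
    (Fintype.bijective_iff_injective_and_card E).mpr ⟨hEinj, cardE⟩
  have fibcard : ∀ y : O → I,
      Fintype.card {v : ι → I // y = fun j => f j v} = Fintype.card (C → I) := by
    intro y
    have e1 : {v : ι → I // y = fun j => f j v} ≃ {p : (O → I) × (C → I) // p.1 = y} :=
      (Equiv.ofBijective E hEbij).subtypeEquiv (fun v => by
        constructor
        · intro h; exact h.symm
        · intro h; exact h.symm)
    have e2 : {p : (O → I) × (C → I) // p.1 = y} ≃ (C → I) :=
      { toFun := fun p => p.1.2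
        invFun := fun c => ⟨(y, c), rfl⟩
        left_inv := by rintro ⟨⟨a, b⟩, rfl⟩; rfl
        right_inv := fun c => rfl }
    exact Fintype.card_congr (e1.trans e2)
  have hO0 : (Fintype.card (O → I) : ℝ≥0∞) ≠ 0 := by
    exact_mod_cast Fintype.card_ne_zero
  have hC0 : (Fintype.card (C → I) : ℝ≥0∞) ≠ 0 := by
    exact_mod_cast Fintype.card_ne_zero
  have hcards : (Fintype.card (ι → I) : ℝ≥0∞)
      = (Fintype.card (O → I) : ℝ≥0∞) * (Fintype.card (C → I) : ℝ≥0∞) := by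
    rw [cardE, Fintype.card_prod]
    push_cast
    ring
  ext y
  rw [PMF.map_apply, PMF.uniformOfFintype_apply, tsum_fintype]
  simp only [PMF.uniformOfFintype_apply]
  rw [Finset.sum_ite, Finset.sum_const, Finset.sum_const_zero, add_zero, nsmul_eq_mul,
    ← Fintype.card_subtype, fibcard y, hcards,
    ENNReal.mul_inv (Or.inl hO0) (Or.inr hC0), mul_comm
      (Fintype.card (O → I) : ℝ≥0∞)⁻¹, ← mul_assoc,
    ENNReal.mul_inv_cancel hC0 (ENNReal.natCast_ne_top _), one_mul]
end

section
/- Let I be a finite nonempty type, ι a finite type, i : ι, and f : (ι → I) → I a function that is invertible at coordinate i, i.e. for every v : ι → I the map x ↦ f (Function.update v i x) : I → I is bijective. Then PMF.map f (PMF.uniformOfFintype (ι → I)) = PMF.uniformOfFintype I. -/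
open scoped ENNReal

theorem invertible_at_coordinate_uniform
    {I ι : Type*} [Fintype I] [Nonempty I] [DecidableEq ι] [Fintype ι]
    (i : ι) (f : (ι → I) → I)
    (hf : ∀ v : ι → I, Function.Bijective (fun x : I => f (Function.update v i x))) :
    PMF.map f (PMF.uniformOfFintype (ι → I)) = PMF.uniformOfFintype I := by
  classical
  set e := Equiv.funSplitAt i I with he
  have hupd : ∀ (x : I) (w : {j : ι // j ≠ i} → I),
      e.symm (x, w) = Function.update (e.symm (Classical.arbitrary I, w)) i x := by
    intro x w
    funext j
    by_cases h : j = i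
    · subst h; simp [he, Equiv.funSplitAt, Equiv.piSplitAt]
    · simp [he, Equiv.funSplitAt, Equiv.piSplitAt, Function.update_of_ne h, h]
  have key : ∀ a : I, (Finset.univ.filter (fun v : ι → I => a = f v)).card
      = Fintype.card ({j : ι // j ≠ i} → I) := by
    intro a
    rw [Finset.card_filter]
    rw [← Fintype.sum_equiv e.symm (fun p => if a = f (e.symm p) then 1 else 0)
        (fun v => if a = f v then 1 else 0) (fun p => rfl)]
    rw [Fintype.sum_prod_type_right]
    have hw : ∀ w : {j : ι // j ≠ i} → I,
        (∑ x : I, if a = f (e.symm (x, w)) then 1 else 0) = 1 := by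
      intro w
      set v := e.symm (Classical.arbitrary I, w) with hv
      have hb := hf v
      let g := Equiv.ofBijective _ hb
      rw [Fintype.sum_equiv g (fun x => if a = f (e.symm (x, w)) then 1 else 0)
          (fun y => if a = y then 1 else 0)
          (fun x => by simp only [g, Equiv.ofBijective_apply, hupd x w, ← hv])]
      simp
    simp only [hw, Finset.sum_const, smul_eq_mul, mul_one, Finset.card_univ]
  ext a
  rw [PMF.map_apply, tsum_fintype]
  simp only [PMF.uniformOfFintype_apply]
  rw [Finset.sum_ite, Finset.sum_const, Finset.sum_const_zero, add_zero, key a]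
  have hcard : (Fintype.card (ι → I) : ℝ≥0∞)
      = (Fintype.card I : ℝ≥0∞) * (Fintype.card ({j : ι // j ≠ i} → I) : ℝ≥0∞) := by
    rw [Fintype.card_congr e, Fintype.card_prod]
    push_cast; ring
  rw [nsmul_eq_mul, hcard]
  have h1 : (Fintype.card I : ℝ≥0∞) ≠ 0 := by simp [Fintype.card_ne_zero]
  have h2 : (Fintype.card ({j : ι // j ≠ i} → I) : ℝ≥0∞) ≠ 0 := by
    simp [Fintype.card_ne_zero]
  rw [ENNReal.mul_inv (Or.inl h1) (Or.inl (ENNReal.natCast_ne_top _))]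
  rw [mul_comm ((Fintype.card I : ℝ≥0∞))⁻¹, ← mul_assoc,
    ENNReal.mul_inv_cancel h2 (ENNReal.natCast_ne_top _), one_mul]
end

section
/- Let ι be a type, I an additive group, and i : ι. Suppose f : (ι → I) → I is invertible at coordinate i, and g : (ι → I) → I does not depend on coordinate i. Then the functions v ↦ f v + g v and v ↦ g v + f v are invertible at coordinate i. -/
theorem invertible_add_indep
    {ι I : Type*} [DecidableEq ι] [AddGroup I] (i : ι)
    (f g : (ι → I) → I)
    (hf : ∀ v : ι → I, Function.Bijective (fun x : I => f (Function.update v i x)))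
    (hg : ∀ (v : ι → I) (x : I), g (Function.update v i x) = g v) :
    (∀ v : ι → I, Function.Bijective
      (fun x : I => f (Function.update v i x) + g (Function.update v i x))) ∧
    (∀ v : ι → I, Function.Bijective
      (fun x : I => g (Function.update v i x) + f (Function.update v i x))) := by
  constructor
  · intro v
    have : (fun x : I => f (Function.update v i x) + g (Function.update v i x))
        = (fun y : I => y + g v) ∘ (fun x : I => f (Function.update v i x)) := by
      funext x; simp [hg]
    rw [this]
    exact ((Equiv.addRight (g v)).bijective).comp (hf v)
  · intro v
    have : (fun x : I => g (Function.update v i x) + f (Function.update v i x))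
        = (fun y : I => g v + y) ∘ (fun x : I => f (Function.update v i x)) := by
      funext x; simp [hg]
    rw [this]
    exact ((Equiv.addLeft (g v)).bijective).comp (hf v)
end

section
/- Let ι be a finite type, I a finite nonempty type, i : ι, and e : (ι → I) → I a function that is invertible at coordinate i, i.e. for every v : ι → I the map x ↦ e (Function.update v i x) : I → I is bijective. Then the map Φ : (ι → I) → (ι → I) defined by Φ v = Function.update v i (e v) is bijective, and consequently PMF.map Φ (PMF.uniformOfFintype (ι → I)) = PMF.uniformOfFintype (ι → I). -/
theorem simply_dom_sound
    {ι I : Type*} [DecidableEq ι] [Fintype ι] [Fintype I] [Nonempty I]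
    (i : ι) (e : (ι → I) → I)
    (he : ∀ v : ι → I, Function.Bijective (fun x : I => e (Function.update v i x))) :
    Function.Bijective (fun v : ι → I => Function.update v i (e v)) ∧
    PMF.map (fun v : ι → I => Function.update v i (e v)) (PMF.uniformOfFintype (ι → I))
      = PMF.uniformOfFintype (ι → I) := by
  have hb : Function.Bijective (fun v : ι → I => Function.update v i (e v)) := by
    constructor
    · intro v w h
      simp only at h
      have hj : ∀ j, j ≠ i → v j = w j := by
        intro j hj
        have := congrFun h j
        simpa [Function.update_of_ne hj] using this
      have hvw : v = Function.update w i (v i) := by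
        funext j
        by_cases hji : j = i
        · subst hji; simp
        · simp [Function.update_of_ne hji, hj j hji]
      have hei : e v = v i → False ∨ True := fun _ => Or.inr trivial
      have h1 : e (Function.update w i (v i)) = e (Function.update w i (w i)) := by
        have := congrFun h i
        simp only [Function.update_self] at this
        rw [← hvw]
        simpa [Function.update_eq_self] using this
      have hvi : v i = w i := (he w).1 h1
      rw [hvw, hvi, Function.update_eq_self]
    · intro u
      obtain ⟨x, hx⟩ := (he u).2 (u i)
      refine ⟨Function.update u i x, ?_⟩
      simp only
      have hev : e (Function.update u i x) = u i := hx
      rw [hev]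
      funext j
      by_cases hji : j = i
      · subst hji; simp
      · simp [Function.update_of_ne hji]
  refine ⟨hb, ?_⟩
  ext b
  rw [PMF.map_apply]
  set Φe := Equiv.ofBijective _ hb with hΦe
  rw [tsum_eq_single (Φe.symm b)]
  · have : Function.update (Φe.symm b) i (e (Φe.symm b)) = b := Φe.apply_symm_apply b
    simp [this, PMF.uniformOfFintype_apply]
  · intro a ha
    have : b ≠ Function.update a i (e a) := by
      intro hcontra
      apply ha
      have : Φe a = b := hcontra.symm
      rw [← this, Equiv.symm_apply_apply]
    simp [this]
end

section
/- Let ι be a finite type, I a finite nonempty additive commutative group, i j : ι with i ≠ j, and F : (ι → I) → C a function that depends on coordinates i and j only through their sum: whenever v w : ι → I satisfy v i + v j = w i + w j and v x = w x for all x with x ≠ i and x ≠ j, then F v = F w. Then PMF.map F (PMF.uniformOfFintype (ι → I)) = PMF.map (fun v => F (Function.update v i 0)) (PMF.uniformOfFintype (ι → I)). -/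
lemma map_equiv_uniform {α : Type*} [Fintype α] [Nonempty α] (e : α ≃ α) :
    PMF.map e (PMF.uniformOfFintype α) = PMF.uniformOfFintype α := by
  classical
  ext a
  rw [PMF.map_apply]
  rw [show (∑' b, if a = e b then (PMF.uniformOfFintype α) b else 0)
      = ∑' b, if b = e.symm a then (PMF.uniformOfFintype α) b else 0 by
    congr 1; funext b; congr 1
    exact propext ⟨fun h => (Equiv.eq_symm_apply e).mpr h.symm, fun h => ((Equiv.eq_symm_apply e).mp h).symm⟩]
  simp [tsum_ite_eq]

theorem simply_col_sound
    {ι I C : Type*} [DecidableEq ι] [Fintype ι] [Fintype I] [Nonempty I] [AddCommGroup I]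
    (i j : ι) (hij : i ≠ j) (F : (ι → I) → C)
    (hF : ∀ v w : ι → I, v i + v j = w i + w j →
      (∀ x : ι, x ≠ i → x ≠ j → v x = w x) → F v = F w) :
    PMF.map F (PMF.uniformOfFintype (ι → I))
      = PMF.map (fun v => F (Function.update v i 0)) (PMF.uniformOfFintype (ι → I)) := by
  set e : (ι → I) ≃ (ι → I) :=
    { toFun := fun v => Function.update v j (v i + v j)
      invFun := fun v => Function.update v j (v j - v i)
      left_inv := by
        intro v; funext x
        by_cases hx : x = j <;>
          simp [Function.update_apply, hx, hij, Function.update_of_ne (Ne.symm hij)]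
      right_inv := by
        intro v; funext x
        by_cases hx : x = j <;>
          simp [Function.update_apply, hx, hij, Function.update_of_ne (Ne.symm hij)] } with he
  have hcomp : F = (fun v => F (Function.update v i 0)) ∘ e := by
    funext v
    apply hF
    · simp [he, Function.update_apply, hij, Ne.symm hij]
    · intro x hxi hxj
      simp [he, Function.update_apply, hxi, hxj]
  calc PMF.map F (PMF.uniformOfFintype (ι → I))
      = PMF.map ((fun v => F (Function.update v i 0)) ∘ e) (PMF.uniformOfFintype (ι → I)) := by
        rw [← hcomp]
    _ = PMF.map (fun v => F (Function.update v i 0)) (PMF.map e (PMF.uniformOfFintype (ι → I))) := by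
        rw [PMF.map_comp]
    _ = _ := by rw [map_equiv_uniform]
end

section
/- Let I be a finite nonempty type, ι a finite type indexing the random variables, K a type of secret inputs, α a type, O₂ a finite type, and ρ : O₂ ↪ ι an injection. Let F : K → (ι → I) → α and g : O₂ → K → (ι → I) → I satisfy: (i) for every k : K and j : O₂, F k does not depend on coordinate ρ j; (ii) for every k : K and j j' : O₂ with j' ≠ j, g j k does not depend on coordinate ρ j'; (iii) for every k : K and j : O₂, g j k is invertible at coordinate ρ j; and (iv) F is statistically independent of the secret, i.e. for all k₁ k₂ : K, PMF.map (F k₁) (PMF.uniformOfFintype (ι → I)) = PMF.map (F k₂) (PMF.uniformOfFintype (ι → I)). Then the joint family is statistically independent of the secret: for all k₁ k₂ : K, PMF.map (fun v => (F k₁ v, fun j : O₂ => g j k₁ v)) (PMF.uniformOfFintype (ι → I)) = PMF.map (fun v => (F k₂ v, fun j : O₂ => g j k₂ v)) (PMF.uniformOfFintype (ι → I)). -/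
open Classical in
noncomputable def setR {ι I O₂ : Type*} (ρ : O₂ ↪ ι) (v : ι → I) (x : O₂ → I) : ι → I :=
  fun i => if h : ∃ j, ρ j = i then x h.choose else v i

lemma setR_rho {ι I O₂ : Type*} (ρ : O₂ ↪ ι) (v : ι → I) (x : O₂ → I) (j : O₂) :
    setR ρ v x (ρ j) = x j := by
  have h : ∃ j', ρ j' = ρ j := ⟨j, rfl⟩
  rw [setR, dif_pos h]
  congr 1
  exact ρ.injective h.choose_spec

lemma setR_not {ι I O₂ : Type*} (ρ : O₂ ↪ ι) (v : ι → I) (x : O₂ → I) (i : ι)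
    (h : ∀ j, ρ j ≠ i) : setR ρ v x i = v i := by
  rw [setR, dif_neg]
  rintro ⟨j, hj⟩
  exact h j hj

lemma update_inv {ι I α O₂ : Type*} [DecidableEq ι] (ρ : O₂ → ι) {f : (ι → I) → α}
    (t : Finset O₂)
    (hf : ∀ j ∈ t, ∀ v x, f (Function.update v (ρ j) x) = f v) :
    ∀ v v' : ι → I, (∀ i, (∀ j ∈ t, ρ j ≠ i) → v i = v' i) → f v = f v' := by
  classical
  induction t using Finset.induction_on with
  | empty =>
    intro v v' h
    congr 1
    funext i
    exact h i (by simp)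
  | @insert a t ha ih =>
    intro v v' h
    have step : f v = f (Function.update v' (ρ a) (v (ρ a))) := by
      refine ih (fun j hj v x => hf j (Finset.mem_insert_of_mem hj) v x) _ _ ?_
      intro i hi
      by_cases hia : ρ a = i
      · subst hia; simp
      · rw [Function.update_of_ne (fun hh => hia hh.symm)]
        exact h i (by
          intro j hj
          rcases Finset.mem_insert.mp hj with rfl | hj
          · exact hia
          · exact hi j hj)
    rw [step, hf a (Finset.mem_insert_self a t)]

lemma map_unif_apply {β γ : Type*} [Fintype β] [Nonempty β] (f : β → γ) (b : γ) :
    PMF.map f (PMF.uniformOfFintype β) b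
      = (Nat.card {a | f a = b} : ENNReal) / Fintype.card β := by
  classical
  rw [PMF.map_apply, tsum_fintype]
  simp only [PMF.uniformOfFintype_apply]
  rw [← Finset.sum_filter, Finset.sum_const]
  have : (Finset.univ.filter (fun a => b = f a)).card = Nat.card {a | f a = b} := by
    rw [Nat.card_eq_fintype_card]
    simp [Fintype.card_subtype, eq_comm]
  rw [this, nsmul_eq_mul, div_eq_mul_inv]

lemma map_bij_unif {β : Type*} [Fintype β] [Nonempty β] {e : β → β}
    (he : Function.Bijective e) :
    PMF.map e (PMF.uniformOfFintype β) = PMF.uniformOfFintype β := by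
  classical
  ext b
  rw [PMF.map_apply, tsum_fintype]
  simp only [PMF.uniformOfFintype_apply]
  have : ∀ a : β, (b = e a) ↔ (a = (Equiv.ofBijective e he).symm b) := by
    intro a
    rw [Equiv.eq_symm_apply]
    exact eq_comm
  simp only [this]
  rw [Fintype.sum_ite_eq' ((Equiv.ofBijective e he).symm b)]

theorem sid3_sound
    {I ι K α O₂ : Type*} [Fintype I] [Nonempty I] [DecidableEq ι] [Fintype ι] [Fintype O₂]
    (ρ : O₂ ↪ ι)
    (F : K → (ι → I) → α) (g : O₂ → K → (ι → I) → I)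
    (h1 : ∀ (k : K) (j : O₂) (v : ι → I) (x : I), F k (Function.update v (ρ j) x) = F k v)
    (h2 : ∀ (k : K) (j j' : O₂), j' ≠ j → ∀ (v : ι → I) (x : I),
      g j k (Function.update v (ρ j') x) = g j k v)
    (h3 : ∀ (k : K) (j : O₂) (v : ι → I),
      Function.Bijective (fun x : I => g j k (Function.update v (ρ j) x)))
    (h4 : ∀ k₁ k₂ : K, PMF.map (F k₁) (PMF.uniformOfFintype (ι → I))
      = PMF.map (F k₂) (PMF.uniformOfFintype (ι → I)))
    (k₁ k₂ : K) :
    PMF.map (fun v => (F k₁ v, fun j : O₂ => g j k₁ v)) (PMF.uniformOfFintype (ι → I))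
      = PMF.map (fun v => (F k₂ v, fun j : O₂ => g j k₂ v)) (PMF.uniformOfFintype (ι → I)) := by
  classical
  set Ψ : K → (ι → I) → (ι → I) := fun k v => setR ρ v (fun j => g j k v) with hΨ
  have hΨrho : ∀ k v j, Ψ k v (ρ j) = g j k v := fun k v j => setR_rho ρ v _ j
  have hΨnot : ∀ k v i, (∀ j, ρ j ≠ i) → Ψ k v i = v i := fun k v i h => setR_not ρ v _ i h
  have hFinv : ∀ k (v v' : ι → I), (∀ i, (∀ j : O₂, ρ j ≠ i) → v i = v' i) → F k v = F k v' := by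
    intro k v v' h
    exact update_inv ρ Finset.univ (fun j _ w x => h1 k j w x) v v'
      (fun i hi => h i (fun j => hi j (Finset.mem_univ j)))
  have hΨinj : ∀ k, Function.Injective (Ψ k) := by
    intro k v v' hvv
    have hoff : ∀ i, (∀ j, ρ j ≠ i) → v i = v' i := by
      intro i hi
      have h := congrFun hvv i
      rwa [hΨnot k v i hi, hΨnot k v' i hi] at h
    funext i
    by_cases hi : ∃ j, ρ j = i
    · obtain ⟨j, rfl⟩ := hi
      have hg : g j k v = g j k v' := by
        have h := congrFun hvv (ρ j); rwa [hΨrho, hΨrho] at h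
      have key : g j k (Function.update v (ρ j) (v' (ρ j))) = g j k v' := by
        refine update_inv ρ (Finset.univ.filter (fun j' => j' ≠ j))
          (fun j' hj' w x => h2 k j j' (Finset.mem_filter.mp hj').2 w x) _ _ ?_
        intro i hi
        by_cases hij : ρ j = i
        · subst hij; simp
        · rw [Function.update_of_ne (fun hh => hij hh.symm)]
          by_cases hir : ∃ j', ρ j' = i
          · obtain ⟨j', rfl⟩ := hir
            exact absurd rfl (hi j' (Finset.mem_filter.mpr ⟨Finset.mem_univ _,
              fun hh => hij (by rw [hh])⟩))
          · exact hoff i (fun j'' hj'' => hir ⟨j'', hj''⟩)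
      have hstart : g j k (Function.update v (ρ j) (v (ρ j))) = g j k v := by
        rw [Function.update_eq_self]
      exact (h3 k j v).injective (by
        show g j k (Function.update v (ρ j) (v (ρ j))) = g j k (Function.update v (ρ j) (v' (ρ j)))
        rw [hstart, key, hg])
    · exact hoff i (fun j hj => hi ⟨j, hj⟩)
  have hΨbij : ∀ k, Function.Bijective (Ψ k) :=
    fun k => Finite.injective_iff_bijective.mp (hΨinj k)
  have hjoint : ∀ k, (fun v => (F k v, fun j : O₂ => g j k v))
      = (fun w => (F k w, fun j : O₂ => w (ρ j))) ∘ Ψ k := by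
    intro k
    funext v
    refine Prod.ext ?_ ?_
    · exact hFinv k v (Ψ k v) (fun i hi => (hΨnot k v i hi).symm)
    · funext j; exact (hΨrho k v j).symm
  have hT : ∀ k, PMF.map (fun v => (F k v, fun j : O₂ => g j k v)) (PMF.uniformOfFintype (ι → I))
      = PMF.map (fun w => (F k w, fun j : O₂ => w (ρ j))) (PMF.uniformOfFintype (ι → I)) := by
    intro k
    rw [hjoint k, ← PMF.map_comp, map_bij_unif (hΨbij k)]
  rw [hT k₁, hT k₂]
  have hFsetR : ∀ k (w : ι → I) (x : O₂ → I), F k (setR ρ w x) = F k w :=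
    fun k w x => hFinv k (setR ρ w x) w (fun i hi => setR_not ρ w x i hi)
  have hFcard : ∀ a : α, Nat.card {w : ι → I | F k₁ w = a} = Nat.card {w : ι → I | F k₂ w = a} := by
    intro a
    have h := DFunLike.congr_fun (h4 k₁ k₂) a
    rw [map_unif_apply, map_unif_apply] at h
    have hc : (Fintype.card (ι → I) : ENNReal) ≠ 0 := by
      simp [Fintype.card_ne_zero]
    have hc' : (Fintype.card (ι → I) : ENNReal) ≠ ⊤ := by simp
    have h2' := congrArg (· * (Fintype.card (ι → I) : ENNReal)) h
    simp only [ENNReal.div_mul_cancel hc hc'] at h2'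
    exact_mod_cast h2'
  have hprod : ∀ (k : K) (a : α) (x : O₂ → I),
      Nat.card {w : ι → I | F k w = a ∧ (fun j : O₂ => w (ρ j)) = x} * Fintype.card (O₂ → I)
        = Nat.card {w : ι → I | F k w = a} := by
    intro k a x
    rw [← Nat.card_eq_fintype_card (α := O₂ → I), ← Nat.card_prod]
    refine Nat.card_congr (Equiv.symm ?_)
    refine ⟨fun w => (⟨setR ρ w.1 x, ?_, ?_⟩, fun j => w.1 (ρ j)),
            fun p => ⟨setR ρ p.1.1 p.2, ?_⟩, ?_, ?_⟩
    · rw [hFsetR]; exact w.2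
    · funext j; exact setR_rho ρ w.1 x j
    · show F k (setR ρ p.1.1 p.2) = a
      rw [hFsetR]; exact p.1.2.1
    · intro w
      refine Subtype.ext ?_
      show setR ρ (setR ρ w.1 x) (fun j => w.1 (ρ j)) = w.1
      funext i
      by_cases hi : ∃ j, ρ j = i
      · obtain ⟨j, rfl⟩ := hi
        simp [setR_rho]
      · rw [setR_not ρ _ _ i (fun j hj => hi ⟨j, hj⟩),
            setR_not ρ _ _ i (fun j hj => hi ⟨j, hj⟩)]
    · rintro ⟨⟨u, hu1, hu2⟩, y⟩
      refine Prod.ext (Subtype.ext ?_) ?_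
      · show setR ρ (setR ρ u y) x = u
        funext i
        by_cases hi : ∃ j, ρ j = i
        · obtain ⟨j, rfl⟩ := hi
          rw [setR_rho]
          exact (congrFun hu2 j).symm
        · rw [setR_not ρ _ _ i (fun j hj => hi ⟨j, hj⟩),
              setR_not ρ _ _ i (fun j hj => hi ⟨j, hj⟩)]
      · show (fun j => setR ρ u y (ρ j)) = y
        funext j; exact setR_rho ρ u y j
  apply PMF.ext
  rintro ⟨a, x⟩
  rw [map_unif_apply, map_unif_apply]
  congr 2
  have hset : ∀ k : K, {w : ι → I | (fun w => (F k w, fun j : O₂ => w (ρ j))) w = (a, x)}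
      = {w : ι → I | F k w = a ∧ (fun j : O₂ => w (ρ j)) = x} := by
    intro k; ext w; simp [Prod.ext_iff]
  rw [hset k₁, hset k₂]
  have hpos : 0 < Fintype.card (O₂ → I) := Fintype.card_pos
  exact Nat.eq_of_mul_eq_mul_right hpos (by rw [hprod k₁ a x, hprod k₂ a x, hFcard a])
end

section
/- Let I be a finite nonempty type, ι a finite type indexing the random variables, K a type of secret inputs, i : ι, op : I → I → I a binary operation, and f g : K → (ι → I) → I. Assume: (i) for every k : K, f k is invertible at coordinate i; (ii) for every k : K, g k does not depend on coordinate i; and (iii) g is statistically independent of the secret, i.e. for all k₁ k₂ : K, PMF.map (g k₁) (PMF.uniformOfFintype (ι → I)) = PMF.map (g k₂) (PMF.uniformOfFintype (ι → I)). Then the family k ↦ (fun v => op (f k v) (g k v)) is statistically independent of the secret: for all k₁ k₂ : K, PMF.map (fun v => op (f k₁ v) (g k₁ v)) (PMF.uniformOfFintype (ι → I)) = PMF.map (fun v => op (f k₂ v) (g k₂ v)) (PMF.uniformOfFintype (ι → I)). -/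
open Finset in
private lemma sum_update_aux {I ι : Type*} [Fintype I] [DecidableEq ι] [Fintype ι]
    (i : ι) (F : (ι → I) → ENNReal) :
    ∑ x : I, ∑ w : ι → I, F (Function.update w i x)
      = (Fintype.card I : ENNReal) * ∑ v : ι → I, F v := by
  classical
  set e := Equiv.funSplitAt i I with he
  have hupd : ∀ (x y : I) (r : {j // j ≠ i} → I),
      Function.update (e.symm (y, r)) i x = e.symm (x, r) := by
    intro x y r
    funext j
    rcases eq_or_ne j i with h | h
    · subst h; simp [he, Function.update_self]
    · simp [he, Function.update_of_ne h, Equiv.funSplitAt_symm_apply, dif_neg h]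
  calc
    ∑ x : I, ∑ w : ι → I, F (Function.update w i x)
        = ∑ x : I, ∑ p : I × ({j // j ≠ i} → I), F (Function.update (e.symm p) i x) := by
          refine Finset.sum_congr rfl fun x _ => ?_
          exact (Equiv.sum_comp e.symm (fun w => F (Function.update w i x))).symm
    _ = ∑ x : I, ∑ y : I, ∑ r : {j // j ≠ i} → I, F (e.symm (x, r)) := by
          refine Finset.sum_congr rfl fun x _ => ?_
          rw [Fintype.sum_prod_type]
          exact Finset.sum_congr rfl fun y _ => Finset.sum_congr rfl fun r _ => by
            rw [hupd]
    _ = ∑ x : I, (Fintype.card I : ENNReal) * ∑ r : {j // j ≠ i} → I, F (e.symm (x, r)) := by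
          refine Finset.sum_congr rfl fun x _ => ?_
          rw [Finset.sum_const, nsmul_eq_mul, Fintype.card]
    _ = (Fintype.card I : ENNReal) * ∑ p : I × ({j // j ≠ i} → I), F (e.symm p) := by
          rw [← Finset.mul_sum, Fintype.sum_prod_type]
    _ = (Fintype.card I : ENNReal) * ∑ v : ι → I, F v := by
          rw [Equiv.sum_comp e.symm]

theorem sid4_sound
    {I ι K : Type*} [Fintype I] [Nonempty I] [DecidableEq ι] [Fintype ι]
    (i : ι) (op : I → I → I) (f g : K → (ι → I) → I)
    (h1 : ∀ (k : K) (v : ι → I),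
      Function.Bijective (fun x : I => f k (Function.update v i x)))
    (h2 : ∀ (k : K) (v : ι → I) (x : I), g k (Function.update v i x) = g k v)
    (h3 : ∀ k₁ k₂ : K, PMF.map (g k₁) (PMF.uniformOfFintype (ι → I))
      = PMF.map (g k₂) (PMF.uniformOfFintype (ι → I)))
    (k₁ k₂ : K) :
    PMF.map (fun v => op (f k₁ v) (g k₁ v)) (PMF.uniformOfFintype (ι → I))
      = PMF.map (fun v => op (f k₂ v) (g k₂ v)) (PMF.uniformOfFintype (ι → I)) := by
  classical
  have hM0 : (Fintype.card I : ENNReal) ≠ 0 := by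
    exact_mod_cast Fintype.card_ne_zero
  have hMt : (Fintype.card I : ENNReal) ≠ ⊤ := ENNReal.natCast_ne_top _
  suffices key : ∀ k : K,
      PMF.map (fun v => op (f k v) (g k v)) (PMF.uniformOfFintype (ι → I))
        = (PMF.map (g k) (PMF.uniformOfFintype (ι → I))).bind
            (fun y => PMF.map (fun x => op x y) (PMF.uniformOfFintype I)) by
    rw [key k₁, key k₂, h3 k₁ k₂]
  intro k
  ext z
  rw [PMF.bind_map]
  simp only [PMF.map_apply, PMF.bind_apply, PMF.uniformOfFintype_apply, tsum_fintype,
    Function.comp]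
  set N : ENNReal := ((Fintype.card (ι → I) : ℕ) : ENNReal)⁻¹ with hN
  refine (ENNReal.mul_right_inj hM0 hMt).mp ?_
  have lhs :
      (Fintype.card I : ENNReal)
          * ∑ v : ι → I, (if z = op (f k v) (g k v) then N else 0)
        = ∑ v : ι → I, ∑ x : I, (if z = op x (g k v) then N else 0) := by
    rw [← sum_update_aux i (fun v => if z = op (f k v) (g k v) then N else 0)]
    rw [Finset.sum_comm]
    refine Finset.sum_congr rfl fun w _ => ?_
    have hb := h1 k w
    rw [← Equiv.sum_comp (Equiv.ofBijective _ hb)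
      (fun x => if z = op x (g k w) then N else 0)]
    refine Finset.sum_congr rfl fun x _ => ?_
    simp [Equiv.ofBijective, h2 k w x]
    congr
  rw [lhs, Finset.mul_sum]
  refine Finset.sum_congr rfl fun v _ => ?_
  rw [Finset.mul_sum, Finset.mul_sum]
  refine Finset.sum_congr rfl fun x _ => ?_
  rcases eq_or_ne z (op x (g k v)) with h | h
  · simp [h, mul_comm]
    rw [← mul_assoc, ENNReal.mul_inv_cancel hM0 hMt, one_mul]
  · simp [h]
end

section
/- Let K be a type, R₁ and R₂ finite nonempty types, C₁ and C₂ types, and F₁ : K → R₁ → C₁ and F₂ : K → R₂ → C₂ two families each statistically independent of the secret, i.e. for all k₁ k₂ : K, PMF.map (F₁ k₁) (PMF.uniformOfFintype R₁) = PMF.map (F₁ k₂) (PMF.uniformOfFintype R₁), and likewise for F₂. Then the joint family on the product of random inputs is statistically independent of the secret: for all k₁ k₂ : K, PMF.map (fun r : R₁ × R₂ => (F₁ k₁ r.1, F₂ k₁ r.2)) (PMF.uniformOfFintype (R₁ × R₂)) = PMF.map (fun r : R₁ × R₂ => (F₁ k₂ r.1, F₂ k₂ r.2)) (PMF.uniformOfFintype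 (R₁ × R₂)). -/
lemma uniform_prod_eq {R₁ R₂ : Type*} [Fintype R₁] [Nonempty R₁] [Fintype R₂] [Nonempty R₂] :
    PMF.uniformOfFintype (R₁ × R₂)
      = (PMF.uniformOfFintype R₁).bind fun a => (PMF.uniformOfFintype R₂).map (Prod.mk a) := by
  ext ⟨a, b⟩
  rw [PMF.bind_apply]
  rw [tsum_eq_single a (fun a' h => by
    have : ((PMF.uniformOfFintype R₂).map (Prod.mk a')) (a, b) = 0 := by
      rw [PMF.map_apply]
      refine Summable.tsum_eq_zero_iff ENNReal.summable |>.mpr fun x => ?_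
      simp only [ite_eq_right_iff, Prod.mk.injEq, and_imp]
      rintro rfl rfl
      exact absurd rfl h
    simp [this])]
  rw [PMF.map_apply, tsum_eq_single b (fun b' h => by simp [Prod.ext_iff, Ne.symm h])]
  simp [PMF.uniformOfFintype_apply, Fintype.card_prod, ENNReal.mul_inv, Nat.cast_mul]

lemma map_prod_eq {R₁ R₂ C₁ C₂ : Type*} [Fintype R₁] [Nonempty R₁] [Fintype R₂] [Nonempty R₂]
    (f₁ : R₁ → C₁) (f₂ : R₂ → C₂) :
    PMF.map (fun r : R₁ × R₂ => (f₁ r.1, f₂ r.2)) (PMF.uniformOfFintype (R₁ × R₂))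
      = ((PMF.uniformOfFintype R₁).map f₁).bind
          fun c => ((PMF.uniformOfFintype R₂).map f₂).map (Prod.mk c) := by
  rw [uniform_prod_eq, PMF.map]
  rw [PMF.bind_bind]
  simp only [PMF.map, PMF.bind_bind, PMF.pure_bind, Function.comp_apply]

theorem sid5_sound
    {K R₁ R₂ C₁ C₂ : Type*} [Fintype R₁] [Nonempty R₁] [Fintype R₂] [Nonempty R₂]
    (F₁ : K → R₁ → C₁) (F₂ : K → R₂ → C₂)
    (h₁ : ∀ k₁ k₂ : K,
      PMF.map (F₁ k₁) (PMF.uniformOfFintype R₁) = PMF.map (F₁ k₂) (PMF.uniformOfFintype R₁))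
    (h₂ : ∀ k₁ k₂ : K,
      PMF.map (F₂ k₁) (PMF.uniformOfFintype R₂) = PMF.map (F₂ k₂) (PMF.uniformOfFintype R₂))
    (k₁ k₂ : K) :
    PMF.map (fun r : R₁ × R₂ => (F₁ k₁ r.1, F₂ k₁ r.2)) (PMF.uniformOfFintype (R₁ × R₂))
      = PMF.map (fun r : R₁ × R₂ => (F₁ k₂ r.1, F₂ k₂ r.2)) (PMF.uniformOfFintype (R₁ × R₂)) := by
  rw [map_prod_eq, map_prod_eq, h₁ k₁ k₂, h₂ k₁ k₂]
end

section
/- Let I be a finite nonempty type, ι a finite type indexing the random variables, α a finite nonempty type, O₂ a finite type, and ρ : O₂ ↪ ι an injection. Let F : (ι → I) → α and g : O₂ → (ι → I) → I satisfy: (i) for every j : O₂, F does not depend on coordinate ρ j; (ii) for all j j' : O₂ with j' ≠ j, g j does not depend on coordinate ρ j'; (iii) for every j : O₂, g j is invertible at coordinate ρ j; and (iv) PMF.map F (PMF.uniformOfFintype (ι → I)) = PMF.uniformOfFintype α. Then PMF.map (fun v => (F v, fun j : O₂ => g j v)) (PMF.uniformOfFintype (ι → I)) = PMF.uniformOfFintype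 (α × (O₂ → I)). -/
open scoped ENNReal

-- test aux lemmas
lemma agree_off {I ι α O₂ : Type*} [DecidableEq ι] (ρ : O₂ ↪ ι)
    (F : (ι → I) → α) (s : Finset O₂)
    (h : ∀ j ∈ s, ∀ (v : ι → I) (x : I), F (Function.update v (ρ j) x) = F v)
    (v v' : ι → I) (hvv : ∀ i, (∀ j ∈ s, ρ j ≠ i) → v i = v' i) : F v = F v' := by
  classical
  induction s using Finset.induction generalizing v with
  | empty =>
    have : v = v' := funext fun i => hvv i (by simp)
    rw [this]
  | @insert j s hj ih =>
    have hFj := h j (Finset.mem_insert_self j s) v (v' (ρ j))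
    rw [← hFj]
    refine ih (fun j' hj' => h j' (Finset.mem_insert_of_mem hj')) _ ?_
    intro i hi
    by_cases hij : ρ j = i
    · subst hij; simp
    · rw [Function.update_of_ne (Ne.symm hij)]
      refine hvv i ?_
      intro j' hj'
      rcases Finset.mem_insert.1 hj' with rfl | hm
      · exact hij
      · exact hi j' hm

lemma map_bij_uniform {β : Type*} [Fintype β] [Nonempty β] (f : β → β)
    (hf : Function.Bijective f) :
    PMF.map f (PMF.uniformOfFintype β) = PMF.uniformOfFintype β := by
  classical
  ext b
  rw [PMF.map_apply, PMF.uniformOfFintype_apply]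
  have : ∀ a, (if b = f a then (PMF.uniformOfFintype β) a else 0)
      = (fun x => if b = x then ((Fintype.card β : ℝ≥0∞))⁻¹ else 0) (f a) := by
    intro a; simp [PMF.uniformOfFintype_apply]
  simp_rw [this]
  have h5 := (Equiv.ofBijective f hf).tsum_eq
    (fun x => if b = x then ((Fintype.card β : ℝ≥0∞))⁻¹ else 0)
  simp only [Equiv.ofBijective_apply] at h5
  rw [h5, tsum_eq_single b (fun b' hb' => by simp [Ne.symm hb'])]
  simp

lemma tsum_ite_card {V : Type*} [Fintype V] (P : V → Prop) [DecidablePred P] (c : ℝ≥0∞) :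
    ∑' v : V, (if P v then c else 0) = (Fintype.card {v // P v} : ℝ≥0∞) * c := by
  rw [tsum_fintype, ← Finset.sum_filter, Finset.sum_const, nsmul_eq_mul, Fintype.card_subtype]

noncomputable def patchFn {I ι O₂ : Type*} [DecidableEq ι] [Fintype O₂] (ρ : O₂ ↪ ι)
    (v : ι → I) (u : O₂ → I) : ι → I :=
  fun i => if h : ∃ j, ρ j = i then u h.choose else v i

lemma patch_rho {I ι O₂ : Type*} [DecidableEq ι] [Fintype O₂] (ρ : O₂ ↪ ι)
    (v : ι → I) (u : O₂ → I) (j : O₂) : patchFn ρ v u (ρ j) = u j := by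
  have h : ∃ j', ρ j' = ρ j := ⟨j, rfl⟩
  simp only [patchFn, dif_pos h]
  congr 1
  exact ρ.injective h.choose_spec

lemma patch_off {I ι O₂ : Type*} [DecidableEq ι] [Fintype O₂] (ρ : O₂ ↪ ι)
    (v : ι → I) (u : O₂ → I) (i : ι) (hi : ¬ ∃ j, ρ j = i) : patchFn ρ v u i = v i :=
  dif_neg hi
theorem rud_sound
    {I ι α O₂ : Type*} [Fintype I] [Nonempty I] [DecidableEq ι] [Fintype ι]
    [Fintype α] [Nonempty α] [DecidableEq O₂] [Fintype O₂]
    (ρ : O₂ ↪ ι)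
    (F : (ι → I) → α) (g : O₂ → (ι → I) → I)
    (h1 : ∀ (j : O₂) (v : ι → I) (x : I), F (Function.update v (ρ j) x) = F v)
    (h2 : ∀ (j j' : O₂), j' ≠ j → ∀ (v : ι → I) (x : I),
      g j (Function.update v (ρ j') x) = g j v)
    (h3 : ∀ (j : O₂) (v : ι → I),
      Function.Bijective (fun x : I => g j (Function.update v (ρ j) x)))
    (h4 : PMF.map F (PMF.uniformOfFintype (ι → I)) = PMF.uniformOfFintype α) :
    PMF.map (fun v => (F v, fun j : O₂ => g j v)) (PMF.uniformOfFintype (ι → I))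
      = PMF.uniformOfFintype (α × (O₂ → I)) := by
  classical
  -- F does not depend on coordinates in the range of ρ
  have hF_off : ∀ v v' : ι → I, (∀ i, (¬ ∃ j', ρ j' = i) → v i = v' i) → F v = F v' := by
    intro v v' hvv
    refine agree_off ρ F Finset.univ (fun j _ v x => h1 j v x) v v' ?_
    intro i hi
    exact hvv i (fun ⟨j', hj'⟩ => hi j' (Finset.mem_univ _) hj')
  -- g j depends only on coordinate ρ j and off-range coordinates
  have hg_off : ∀ (j : O₂) (v v' : ι → I),
      (∀ i, (∀ j' ∈ Finset.univ.erase j, ρ j' ≠ i) → v i = v' i) → g j v = g j v' := by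
    intro j v v' hvv
    exact agree_off ρ (g j) _
      (fun j' hj' v0 x => h2 j j' (Finset.ne_of_mem_erase hj') v0 x) v v' hvv
  have hG_eq : ∀ (j : O₂) (v v' : ι → I) (x : I),
      (∀ i, (¬ ∃ j', ρ j' = i) → v i = v' i) →
      g j (Function.update v (ρ j) x) = g j (Function.update v' (ρ j) x) := by
    intro j v v' x hvv
    refine agree_off ρ (fun v0 => g j (Function.update v0 (ρ j) x)) Finset.univ ?_ v v' ?_
    · intro j' _ v0 y
      by_cases hjj : j' = j
      · subst hjj; beta_reduce; rw [Function.update_idem]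
      · beta_reduce
        rw [Function.update_comm (fun h => hjj (ρ.injective h)), h2 j j' hjj]
    · intro i hi
      exact hvv i (fun ⟨j', hj'⟩ => hi j' (Finset.mem_univ _) hj')
  set G : O₂ → (ι → I) → (I ≃ I) :=
    fun j v => Equiv.ofBijective _ (h3 j v) with hGdef
  have hG_congr : ∀ (j : O₂) (v v' : ι → I),
      (∀ i, (¬ ∃ j', ρ j' = i) → v i = v' i) → G j v = G j v' := by
    intro j v v' hvv
    apply Equiv.coe_fn_injective
    funext x
    simpa [hGdef] using hG_eq j v v' x hvv
  have hG_apply : ∀ (j : O₂) (v : ι → I) (x : I),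
      G j v x = g j (Function.update v (ρ j) x) := fun j v x => rfl
  -- the forward map T and its inverse S
  set T : (ι → I) → (ι → I) := fun v i =>
    if h : ∃ j, ρ j = i then g h.choose v else v i with hTdef
  set S : (ι → I) → (ι → I) := fun v i =>
    if h : ∃ j, ρ j = i then (G h.choose v).symm (v i) else v i with hSdef
  have hT_rho : ∀ (v : ι → I) (j : O₂), T v (ρ j) = g j v := by
    intro v j
    have h : ∃ j', ρ j' = ρ j := ⟨j, rfl⟩
    have hc : h.choose = j := ρ.injective h.choose_spec
    simp only [hTdef, dif_pos h, hc]
  have hT_off : ∀ (v : ι → I) (i : ι), (¬ ∃ j, ρ j = i) → T v i = v i := by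
    intro v i hi; simp only [hTdef, dif_neg hi]
  have hS_rho : ∀ (v : ι → I) (j : O₂), S v (ρ j) = (G j v).symm (v (ρ j)) := by
    intro v j
    have h : ∃ j', ρ j' = ρ j := ⟨j, rfl⟩
    have hc : h.choose = j := ρ.injective h.choose_spec
    simp only [hSdef, dif_pos h, hc]
  have hS_off : ∀ (v : ι → I) (i : ι), (¬ ∃ j, ρ j = i) → S v i = v i := by
    intro v i hi; simp only [hSdef, dif_neg hi]
  -- g j (S v) = v (ρ j)
  have hgS : ∀ (j : O₂) (v : ι → I), g j (S v) = v (ρ j) := by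
    intro j v
    have heq : g j (S v) = g j (Function.update v (ρ j) ((G j v).symm (v (ρ j)))) := by
      refine hg_off j _ _ ?_
      intro i hi
      by_cases hij : ρ j = i
      · subst hij
        rw [hS_rho v j, Function.update_self]
      · have hnr : ¬ ∃ j', ρ j' = i := by
          rintro ⟨j', rfl⟩
          by_cases hjj : j' = j
          · exact hij (by rw [hjj])
          · exact hi j' (Finset.mem_erase.2 ⟨hjj, Finset.mem_univ _⟩) rfl
        rw [hS_off v i hnr, Function.update_of_ne (fun hh => hij hh.symm)]
    rw [heq, ← hG_apply, Equiv.apply_symm_apply]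
  have hTS : ∀ v : ι → I, T (S v) = v := by
    intro v
    funext i
    by_cases h : ∃ j, ρ j = i
    · obtain ⟨j, rfl⟩ := h
      rw [hT_rho, hgS]
    · rw [hT_off _ _ h, hS_off _ _ h]
  have hST : ∀ v : ι → I, S (T v) = v := by
    intro v
    funext i
    by_cases h : ∃ j, ρ j = i
    · obtain ⟨j, rfl⟩ := h
      rw [hS_rho, hT_rho]
      have hGc : G j (T v) = G j v := hG_congr j _ _ (fun i hi => hT_off v i hi)
      have hgv : g j v = G j v (v (ρ j)) := by
        rw [hG_apply, Function.update_eq_self]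
      rw [hGc, hgv, Equiv.symm_apply_apply]
    · rw [hS_off _ _ h, hT_off _ _ h]
  have hTbij : Function.Bijective T :=
    Function.bijective_iff_has_inverse.2 ⟨S, hST, hTS⟩
  have hmain : (fun v : ι → I => (F v, fun j : O₂ => g j v))
      = (fun v : ι → I => (F v, fun j : O₂ => v (ρ j))) ∘ T := by
    funext v
    simp only [Function.comp_apply]
    refine Prod.ext ?_ ?_
    · exact (hF_off (T v) v fun i hi => hT_off v i hi).symm
    · funext j
      exact (hT_rho v j).symm
  rw [hmain, ← PMF.map_comp, map_bij_uniform T hTbij]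
  -- now the counting part
  ext p
  obtain ⟨a, w⟩ := p
  rw [PMF.map_apply, PMF.uniformOfFintype_apply]
  simp only [PMF.uniformOfFintype_apply]
  rw [tsum_ite_card (fun v : ι → I => (a, w) = (F v, fun j : O₂ => v (ρ j)))]
  -- extract the value of h4 at a
  have h4a := DFunLike.congr_fun h4 a
  rw [PMF.map_apply, PMF.uniformOfFintype_apply] at h4a
  have hsumA : ∀ v : ι → I, (if a = F v then (PMF.uniformOfFintype (ι → I)) v else 0)
      = (if a = F v then ((Fintype.card (ι → I) : ℝ≥0∞))⁻¹ else 0) := by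
    intro v; simp [PMF.uniformOfFintype_apply]
  simp_rw [hsumA] at h4a
  rw [tsum_ite_card (fun v : ι → I => a = F v)] at h4a
  -- cardinality relation
  have key : Fintype.card {v : ι → I // (a, w) = (F v, fun j : O₂ => v (ρ j))}
      * Fintype.card (O₂ → I) = Fintype.card {v : ι → I // a = F v} := by
    rw [← Fintype.card_prod]
    apply Fintype.card_congr
    refine ⟨fun x => ⟨patchFn ρ x.1.1 x.2, ?_⟩,
            fun y => (⟨patchFn ρ y.1 w, ?_⟩, fun j => y.1 (ρ j)), ?_, ?_⟩
    · obtain ⟨⟨v, hv⟩, u⟩ := x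
      have ha : a = F v := congrArg Prod.fst hv
      exact ha.trans (hF_off v _ fun i hi => (patch_off ρ v u i hi).symm)
    · obtain ⟨v, hv⟩ := y
      have hFp : F (patchFn ρ v w) = F v := hF_off _ v fun i hi => patch_off ρ v w i hi
      refine Prod.ext ?_ ?_
      · exact hv.trans hFp.symm
      · funext j
        exact (patch_rho ρ v w j).symm
    · rintro ⟨⟨v, hv⟩, u⟩
      have hw : w = fun j : O₂ => v (ρ j) := congrArg Prod.snd hv
      refine Prod.ext (Subtype.ext ?_) ?_
      · show patchFn ρ (patchFn ρ v u) w = v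
        funext i
        by_cases h : ∃ j, ρ j = i
        · obtain ⟨j, rfl⟩ := h
          rw [patch_rho]
          exact congrFun hw j
        · rw [patch_off ρ _ _ i h, patch_off ρ _ _ i h]
      · show (fun j : O₂ => patchFn ρ v u (ρ j)) = u
        funext j
        exact patch_rho ρ v u j
    · rintro ⟨v, hv⟩
      refine Subtype.ext ?_
      show patchFn ρ (patchFn ρ v w) (fun j : O₂ => v (ρ j)) = v
      funext i
      by_cases h : ∃ j, ρ j = i
      · obtain ⟨j, rfl⟩ := h
        rw [patch_rho]
      · rw [patch_off ρ _ _ i h, patch_off ρ _ _ i h]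
  -- arithmetic in ℝ≥0∞
  have hK0 : (Fintype.card (O₂ → I) : ℝ≥0∞) ≠ 0 := by
    exact_mod_cast Fintype.card_ne_zero
  have hKt : (Fintype.card (O₂ → I) : ℝ≥0∞) ≠ ⊤ := ENNReal.natCast_ne_top _
  have hA0 : (Fintype.card α : ℝ≥0∞) ≠ 0 := by
    exact_mod_cast Fintype.card_ne_zero
  have hAt : (Fintype.card α : ℝ≥0∞) ≠ ⊤ := ENNReal.natCast_ne_top _
  have hcast : (Fintype.card {v : ι → I // a = F v} : ℝ≥0∞)
      = (Fintype.card {v : ι → I // (a, w) = (F v, fun j : O₂ => v (ρ j))} : ℝ≥0∞)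
        * (Fintype.card (O₂ → I) : ℝ≥0∞) := by
    exact_mod_cast congrArg (fun n : ℕ => (n : ℝ≥0∞)) key.symm
  calc (Fintype.card {v : ι → I // (a, w) = (F v, fun j : O₂ => v (ρ j))} : ℝ≥0∞)
        * ((Fintype.card (ι → I) : ℝ≥0∞))⁻¹
      = (Fintype.card {v : ι → I // (a, w) = (F v, fun j : O₂ => v (ρ j))} : ℝ≥0∞)
          * ((Fintype.card (O₂ → I) : ℝ≥0∞) * ((Fintype.card (O₂ → I) : ℝ≥0∞))⁻¹)
          * ((Fintype.card (ι → I) : ℝ≥0∞))⁻¹ := by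
        rw [ENNReal.mul_inv_cancel hK0 hKt, mul_one]
    _ = ((Fintype.card {v : ι → I // (a, w) = (F v, fun j : O₂ => v (ρ j))} : ℝ≥0∞)
          * (Fintype.card (O₂ → I) : ℝ≥0∞))
          * ((Fintype.card (ι → I) : ℝ≥0∞))⁻¹ * ((Fintype.card (O₂ → I) : ℝ≥0∞))⁻¹ := by
        ring
    _ = (Fintype.card {v : ι → I // a = F v} : ℝ≥0∞)
          * ((Fintype.card (ι → I) : ℝ≥0∞))⁻¹ * ((Fintype.card (O₂ → I) : ℝ≥0∞))⁻¹ := by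
        rw [← hcast]
    _ = ((Fintype.card α : ℝ≥0∞))⁻¹ * ((Fintype.card (O₂ → I) : ℝ≥0∞))⁻¹ := by
        rw [h4a]
    _ = ((Fintype.card α : ℝ≥0∞) * (Fintype.card (O₂ → I) : ℝ≥0∞))⁻¹ :=
        (ENNReal.mul_inv (Or.inl hA0) (Or.inl hAt)).symm
    _ = ((Fintype.card (α × (O₂ → I)) : ℝ≥0∞))⁻¹ := by
        rw [Fintype.card_prod, Nat.cast_mul]
end
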